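/- arXiv:0710.2134 — 4 statements merged into one kernel-verified Lean document; each statement's English description precedes it below -/
import Mathlib

section
/- Let n > 1 be odd and j ≥ 1 even with gcd(j, n) = 1, and define φ_j^(n)(k) = |D(jk, 2n)| with D(p, 2n) the representative of p mod 2n in [−n, n). Then k ↦ φ_j^(n)(k) is a bijection from {1, …, (n−1)/2} onto the set of even numbers {2m : 1 ≤ m ≤ (n−1)/2}, and also a bijection from {(n+1)/2, …, n−1} onto the same set. -/
/-- `phi n j k = |D (j k, 2n)|`, where `D (p, 2n)` is the representative of
`p` mod `2n` lying in `[-n, n)`. -/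
def phi (n j : ℕ) (k : ℤ) : ℤ := |((j : ℤ) * k + (n : ℤ)) % (2 * (n : ℤ)) - (n : ℤ)|

section aux

variable (n j : ℕ)

lemma phi_repr (k : ℤ) : ∃ q : ℤ,
    ((j : ℤ) * k + (n : ℤ)) % (2 * (n : ℤ)) - (n : ℤ) = (j : ℤ) * k - 2 * n * q := by
  refine ⟨((j : ℤ) * k + (n : ℤ)) / (2 * (n : ℤ)), ?_⟩
  rw [Int.emod_def]; ring

lemma int_coprime (hcop : Nat.gcd j n = 1) : IsCoprime (n : ℤ) (j : ℤ) := by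
  rw [Int.isCoprime_iff_gcd_eq_one, Int.gcd_natCast_natCast, Nat.gcd_comm]
  exact hcop

lemma phi_spec (hn : 1 < n) (hodd : Odd n) (heven : Even j) (hcop : Nat.gcd j n = 1)
    (k : ℤ) (hk1 : 1 ≤ k) (hk2 : k ≤ (n : ℤ) - 1) :
    ∃ m : ℤ, 1 ≤ m ∧ m ≤ ((n : ℤ) - 1) / 2 ∧ phi n j k = 2 * m := by
  obtain ⟨q, hq⟩ := phi_repr n j k
  set r : ℤ := ((j : ℤ) * k + (n : ℤ)) % (2 * (n : ℤ)) - (n : ℤ) with hr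
  have hN : (0 : ℤ) < 2 * n := by positivity
  have h1 : 0 ≤ ((j : ℤ) * k + (n : ℤ)) % (2 * (n : ℤ)) := Int.emod_nonneg _ (by omega)
  have h2 : ((j : ℤ) * k + (n : ℤ)) % (2 * (n : ℤ)) < 2 * n := Int.emod_lt_of_pos _ hN
  have hrlb : -(n : ℤ) ≤ r := by omega
  have hrub : r < (n : ℤ) := by omega
  have hje : Even ((j : ℤ)) := by exact_mod_cast heven.natCast (α := ℤ)
  have hreven : Even r := by
    rw [hq]
    rcases hje with ⟨a, ha⟩
    exact ⟨a * k - n * q, by rw [ha]; ring⟩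
  have hno : Odd ((n : ℤ)) := by exact_mod_cast hodd
  have hrne0 : r ≠ 0 := by
    intro h0
    have hdvd : (n : ℤ) ∣ (j : ℤ) * k := by
      refine ⟨2 * q, ?_⟩
      have := hq; rw [h0] at this; linarith
    have hk : (n : ℤ) ∣ k := (int_coprime n j hcop).dvd_of_dvd_mul_left hdvd
    have := Int.le_of_dvd (by omega) hk
    omega
  have hrnen : r ≠ -(n : ℤ) := by
    intro h0
    rw [h0] at hreven
    rcases hno with ⟨a, ha⟩
    rcases hreven with ⟨b, hb⟩
    omega
  have hphi : phi n j k = |r| := rfl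
  rcases hreven with ⟨b0, hb0⟩
  rcases hno with ⟨a, ha⟩
  rcases le_or_gt 0 r with hge | hlt
  · refine ⟨b0, by omega, by omega, ?_⟩
    rw [hphi, abs_of_nonneg hge]; omega
  · refine ⟨-b0, by omega, by omega, ?_⟩
    rw [hphi, abs_of_neg hlt]; omega

lemma phi_inj (hn : 1 < n) (heven : Even j) (hcop : Nat.gcd j n = 1)
    (k₁ k₂ : ℤ) (h₁ : 1 ≤ k₁) (h₁' : k₁ ≤ (n : ℤ) - 1)
    (h₂ : 1 ≤ k₂) (h₂' : k₂ ≤ (n : ℤ) - 1)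
    (hsum : ¬ ((n : ℤ) ∣ (k₁ + k₂))) (heq : phi n j k₁ = phi n j k₂) : k₁ = k₂ := by
  obtain ⟨q₁, hq₁⟩ := phi_repr n j k₁
  obtain ⟨q₂, hq₂⟩ := phi_repr n j k₂
  set r₁ : ℤ := ((j : ℤ) * k₁ + (n : ℤ)) % (2 * (n : ℤ)) - (n : ℤ) with hr₁
  set r₂ : ℤ := ((j : ℤ) * k₂ + (n : ℤ)) % (2 * (n : ℤ)) - (n : ℤ) with hr₂
  have hco := int_coprime n j hcop
  have : r₁ = r₂ ∨ r₁ = -r₂ := abs_eq_abs.mp heq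
  rcases this with h | h
  · have hdvd : (n : ℤ) ∣ (j : ℤ) * (k₁ - k₂) := by
      refine ⟨2 * (q₁ - q₂), ?_⟩
      have := hq₁; have := hq₂
      rw [h] at hq₁
      linarith [hq₁, hq₂]
    have hk : (n : ℤ) ∣ (k₁ - k₂) := hco.dvd_of_dvd_mul_left hdvd
    have := Int.eq_zero_of_abs_lt_dvd hk (by rw [abs_lt]; omega)
    omega
  · exfalso
    have hdvd : (n : ℤ) ∣ (j : ℤ) * (k₁ + k₂) := by
      refine ⟨2 * (q₁ + q₂), ?_⟩
      rw [h] at hq₁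
      linarith [hq₁, hq₂]
    exact hsum (hco.dvd_of_dvd_mul_left hdvd)

end aux

theorem phi_bijOn_of_even (n j : ℕ) (hn : 1 < n) (hodd : Odd n) (hj : 1 ≤ j)
    (heven : Even j) (hcop : Nat.gcd j n = 1) :
    Set.BijOn (phi n j) (Set.Icc (1 : ℤ) (((n : ℤ) - 1) / 2))
      {y : ℤ | ∃ m : ℤ, 1 ≤ m ∧ m ≤ ((n : ℤ) - 1) / 2 ∧ y = 2 * m} ∧
    Set.BijOn (phi n j) (Set.Icc (((n : ℤ) + 1) / 2) ((n : ℤ) - 1))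
      {y : ℤ | ∃ m : ℤ, 1 ≤ m ∧ m ≤ ((n : ℤ) - 1) / 2 ∧ y = 2 * m} := by
  obtain ⟨m', hm'⟩ := hodd
  have hm1 : 1 ≤ m' := by omega
  set M : ℤ := (m' : ℤ) with hM
  have hnM : (n : ℤ) = 2 * M + 1 := by rw [hm']; push_cast; ring
  have hdiv : ((n : ℤ) - 1) / 2 = M := by omega
  have hdiv2 : ((n : ℤ) + 1) / 2 = M + 1 := by omega
  -- the target as a Finset
  set T : Finset ℤ := (Finset.Icc (1 : ℤ) M).image (fun m => 2 * m) with hT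
  have hTcard : T.card = M.toNat := by
    rw [hT, Finset.card_image_of_injective _ (mul_right_injective₀ (by norm_num)),
      Int.card_Icc]
    simp
  have hTset : {y : ℤ | ∃ m : ℤ, 1 ≤ m ∧ m ≤ ((n : ℤ) - 1) / 2 ∧ y = 2 * m} = ↑T := by
    ext y
    simp only [hT, Set.mem_setOf_eq, Finset.coe_image, Finset.coe_Icc, Set.mem_image,
      Set.mem_Icc, hdiv]
    constructor
    · rintro ⟨m, h1, h2, rfl⟩; exact ⟨m, ⟨h1, h2⟩, rfl⟩
    · rintro ⟨m, ⟨h1, h2⟩, rfl⟩; exact ⟨m, h1, h2, rfl⟩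
  have key : ∀ (a b : ℤ), a ≤ b → b - a + 1 = M →
      (∀ k₁ k₂, a ≤ k₁ → k₁ ≤ b → a ≤ k₂ → k₂ ≤ b → ¬ ((n : ℤ) ∣ (k₁ + k₂))) →
      1 ≤ a → b ≤ (n : ℤ) - 1 →
      Set.BijOn (phi n j) (Set.Icc a b) ↑T := by
    intro a b hab hcard hns ha hb
    set S : Finset ℤ := Finset.Icc a b with hS
    have hinj : Set.InjOn (phi n j) ↑S := by
      intro k₁ hk₁ k₂ hk₂ heq
      simp only [hS, Finset.coe_Icc, Set.mem_Icc] at hk₁ hk₂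
      exact phi_inj n j hn heven hcop k₁ k₂ (by omega) (by omega) (by omega) (by omega)
        (hns k₁ k₂ hk₁.1 hk₁.2 hk₂.1 hk₂.2) heq
    have hsub : S.image (phi n j) ⊆ T := by
      intro y hy
      simp only [Finset.mem_image, hS, Finset.mem_Icc] at hy
      obtain ⟨k, ⟨hk1, hk2⟩, rfl⟩ := hy
      obtain ⟨m, hm1', hm2', hphi⟩ := phi_spec n j hn ⟨m', hm'⟩ heven hcop k (by omega) (by omega)
      simp only [hT, Finset.mem_image, Finset.mem_Icc]
      exact ⟨m, ⟨hm1', by omega⟩, hphi.symm⟩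
    have hScard : S.card = M.toNat := by
      rw [hS, Int.card_Icc]; omega
    have himgcard : (S.image (phi n j)).card = T.card := by
      rw [Finset.card_image_of_injOn hinj, hScard, hTcard]
    have himg : S.image (phi n j) = T :=
      Finset.eq_of_subset_of_card_le hsub (le_of_eq himgcard.symm)
    have himg' : phi n j '' ↑S = ↑T := by
      rw [← Finset.coe_image, himg]
    have hcoe : (↑S : Set ℤ) = Set.Icc a b := by rw [hS]; exact Finset.coe_Icc a b
    rw [← himg', ← hcoe]
    exact hinj.bijOn_image
  constructor
  · rw [hTset, hdiv]
    refine key 1 M (by omega) (by omega) ?_ (by omega) (by omega)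
    intro k₁ k₂ ha1 hb1 ha2 hb2 hdvd
    have := Int.le_of_dvd (by omega) hdvd
    omega
  · rw [hTset, hdiv2, show (n : ℤ) - 1 = 2 * M from by omega]
    refine key (M + 1) (2 * M) (by omega) (by omega) ?_ (by omega) (by omega)
    intro k₁ k₂ ha1 hb1 ha2 hb2 hdvd
    have hd2 : (n : ℤ) ∣ (k₁ + k₂ - n) := dvd_sub hdvd (dvd_refl _)
    have := Int.le_of_dvd (by omega) hd2
    omega
end

section
/- Let n, j ≥ 1 with gcd(j, 2n) = d < n, and define φ_j^(n)(k) = |D(jk, 2n)| with D(p, 2n) the representative of p mod 2n in [−n, n). Then for each m ∈ {1, …, n/d − 1}, the number of k ∈ {1, …, n−1} with φ_j^(n)(k) = dm equals d; moreover the image φ_j^(n)({1, …, n−1}) \ {0, n} equals {dm : 1 ≤ m ≤ n/d − 1}. -/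
/-- A multiple of `M` of small absolute value is zero. -/
lemma dvd_small_eq_zero {M x : ℤ} (h : M ∣ x) (h1 : -M < x) (h2 : x < M) : x = 0 := by
  rcases h with ⟨t, rfl⟩
  rcases lt_trichotomy t 0 with ht | ht | ht
  · nlinarith
  · simp [ht]
  · nlinarith

/-- The number of elements congruent to `a` mod `M` in an interval of length `L * M`. -/
lemma count_class (s M : ℤ) (hM : 0 < M) (L : ℕ) (a : ℤ) :
    ((Finset.Ico s (s + (L : ℤ) * M)).filter (fun k => k ≡ a [ZMOD M])).card = L := by
  have h := Int.Ico_filter_modEq_card s (s + (L : ℤ) * M) hM a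
  have hM0 : (M : ℚ) ≠ 0 := by exact_mod_cast hM.ne'
  have hq : (((s + (L : ℤ) * M : ℤ) : ℚ) - (a : ℚ)) / (M : ℚ)
      = (((s : ℤ) : ℚ) - (a : ℚ)) / (M : ℚ) + (L : ℕ) := by
    push_cast
    field_simp
    ring
  rw [hq, Int.ceil_add_natCast] at h
  have h2 : (⌈(((s : ℤ) : ℚ) - (a : ℚ)) / (M : ℚ)⌉ + (L : ℤ)
      - ⌈(((s : ℤ) : ℚ) - (a : ℚ)) / (M : ℚ)⌉) = (L : ℤ) := by ring
  rw [h2] at h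
  have hmax : max (L : ℤ) 0 = (L : ℤ) := max_eq_left (by positivity)
  rw [hmax] at h
  exact_mod_cast h

set_option maxHeartbeats 1600000 in
theorem phi_image_and_card_odd_case (n j d : ℕ) (hn : 1 ≤ n) (hj : 1 ≤ j)
    (hgcd : Nat.gcd j n = d) (hgcd2 : Nat.gcd j (2 * n) = d) (hdn : d < n) :
    (∀ m : ℕ, 1 ≤ m → m ≤ n / d - 1 →
      ((Finset.Icc (1 : ℤ) ((n : ℤ) - 1)).filter
        (fun k => phi n j k = (d : ℤ) * (m : ℤ))).card = d) ∧
    (phi n j '' Set.Icc (1 : ℤ) ((n : ℤ) - 1)) \ {0, (n : ℤ)} =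
      {y : ℤ | ∃ m : ℕ, 1 ≤ m ∧ m ≤ n / d - 1 ∧ y = (d : ℤ) * (m : ℤ)} := by
  classical
  have hd1 : 1 ≤ d := by
    rcases Nat.eq_zero_or_pos d with h | h
    · exfalso
      rw [h, Nat.gcd_eq_zero_iff] at hgcd
      omega
    · exact h
  have hdvdn : d ∣ n := hgcd ▸ Nat.gcd_dvd_right j n
  have hdvdj : d ∣ j := hgcd ▸ Nat.gcd_dvd_left j n
  set Q := n / d with hQdef
  have hQ : d * Q = n := Nat.mul_div_cancel' hdvdn
  have hQ2 : 2 ≤ Q := by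
    by_contra h
    push_neg at h
    interval_cases Q <;> omega
  set J := j / d with hJdef
  have hJ : d * J = j := Nat.mul_div_cancel' hdvdj
  have hco : Nat.Coprime J (2 * Q) := by
    have hdpos : 0 < Nat.gcd j (2 * n) := by omega
    have h := Nat.coprime_div_gcd_div_gcd hdpos
    rw [hgcd2] at h
    have h2 : 2 * n / d = 2 * Q := by rw [Nat.mul_div_assoc 2 hdvdn]
    rwa [h2] at h
  -- integer versions
  have hn0 : (0 : ℤ) < (n : ℤ) := by exact_mod_cast hn
  have hn2 : (2 : ℤ) ≤ (n : ℤ) := by exact_mod_cast (by omega : 2 ≤ n)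
  have hdZ : (1 : ℤ) ≤ (d : ℤ) := by exact_mod_cast hd1
  have hQZ : (d : ℤ) * (Q : ℤ) = (n : ℤ) := by exact_mod_cast hQ
  have hJZ : (d : ℤ) * (J : ℤ) = (j : ℤ) := by exact_mod_cast hJ
  have hQZ2 : (2 : ℤ) ≤ (Q : ℤ) := by exact_mod_cast hQ2
  have hMpos : (0 : ℤ) < 2 * (Q : ℤ) := by linarith
  have h2n : (0 : ℤ) < 2 * (n : ℤ) := by linarith
  have h2nQ : (2 : ℤ) * (n : ℤ) = (d : ℤ) * (2 * (Q : ℤ)) := by linarith [hQZ]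
  -- Bezout inverse
  obtain ⟨u, v, huv⟩ : ∃ u v : ℤ, (J : ℤ) * u + (2 * (Q : ℤ)) * v = 1 := by
    refine ⟨Int.gcdA (J : ℤ) ((2 * Q : ℕ) : ℤ), Int.gcdB (J : ℤ) ((2 * Q : ℕ) : ℤ), ?_⟩
    have h := (Int.gcd_eq_gcd_ab (J : ℤ) ((2 * Q : ℕ) : ℤ)).symm
    have hg : Int.gcd (J : ℤ) ((2 * Q : ℕ) : ℤ) = 1 := by
      rw [Int.gcd_natCast_natCast]
      exact hco
    rw [hg] at h
    push_cast at h ⊢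
    linarith
  have hu : (2 * (Q : ℤ)) ∣ (1 - (J : ℤ) * u) := ⟨v, by linarith⟩
  have hcu : IsCoprime u (2 * (Q : ℤ)) := ⟨(J : ℤ), v, by linarith⟩
  have hcuQ : IsCoprime u (Q : ℤ) := ⟨(J : ℤ), 2 * v, by linarith⟩
  -- key congruence equivalence
  have key : ∀ c k : ℤ, ((j : ℤ) * k ≡ (d : ℤ) * c [ZMOD 2 * (n : ℤ)])
      ↔ (k ≡ u * c [ZMOD 2 * (Q : ℤ)]) := by
    intro c k
    rw [Int.modEq_iff_dvd, Int.modEq_iff_dvd]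
    constructor
    · rintro ⟨t, ht⟩
      have hd0 : (d : ℤ) ≠ 0 := by linarith
      have h1 : (2 * (Q : ℤ)) ∣ (c - (J : ℤ) * k) := by
        refine ⟨t, mul_left_cancel₀ hd0 ?_⟩
        have : (d : ℤ) * (c - (J : ℤ) * k) = (d : ℤ) * c - (j : ℤ) * k := by
          rw [← hJZ]; ring
        rw [this, ht, h2nQ]; ring
      have heq : u * c - k = u * (c - (J : ℤ) * k) - k * (1 - (J : ℤ) * u) := by ring
      rw [heq]
      exact dvd_sub (h1.mul_left u) (hu.mul_left k)
    · intro h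
      have h1 : (2 * (Q : ℤ)) ∣ (c - (J : ℤ) * k) := by
        have heq : c - (J : ℤ) * k = (J : ℤ) * (u * c - k) + c * (1 - (J : ℤ) * u) := by ring
        rw [heq]
        exact dvd_add (h.mul_left _) (hu.mul_left _)
      rcases h1 with ⟨t, ht⟩
      refine ⟨t, ?_⟩
      have : (d : ℤ) * (c - (J : ℤ) * k) = (d : ℤ) * (2 * (Q : ℤ) * t) := by rw [ht]
      calc (d : ℤ) * c - (j : ℤ) * k = (d : ℤ) * (c - (J : ℤ) * k) := by rw [← hJZ]; ring
        _ = (d : ℤ) * (2 * (Q : ℤ) * t) := this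
        _ = 2 * (n : ℤ) * t := by rw [h2nQ]; ring
  -- phi in terms of congruences
  have phi_iff : ∀ e : ℤ, 0 ≤ e → e < (n : ℤ) → ∀ k : ℤ,
      (phi n j k = e ↔ ((j : ℤ) * k ≡ e [ZMOD 2 * (n : ℤ)]
        ∨ (j : ℤ) * k ≡ -e [ZMOD 2 * (n : ℤ)])) := by
    intro e he0 hen k
    set r := ((j : ℤ) * k + (n : ℤ)) % (2 * (n : ℤ)) with hr
    have hr0 : 0 ≤ r := Int.emod_nonneg _ (by linarith)
    have hr1 : r < 2 * (n : ℤ) := Int.emod_lt_of_pos _ h2n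
    have hdvd : (2 * (n : ℤ)) ∣ ((j : ℤ) * k + (n : ℤ)) - r :=
      ⟨((j : ℤ) * k + (n : ℤ)) / (2 * (n : ℤ)), by rw [hr, Int.emod_def]; ring⟩
    rw [phi, ← hr, abs_eq he0]
    rw [Int.modEq_iff_dvd, Int.modEq_iff_dvd]
    constructor
    · rintro (h | h)
      · left
        have heq : e - (j : ℤ) * k = (((j : ℤ) * k + (n : ℤ)) - r) * (-1) := by
          rw [← h]; ring
        rw [heq]
        exact hdvd.mul_right _
      · right
        have heq : -e - (j : ℤ) * k = (((j : ℤ) * k + (n : ℤ)) - r) * (-1) := by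
          rw [← neg_eq_iff_eq_neg.mpr h]; ring
        rw [heq]
        exact hdvd.mul_right _
    · rintro (h | h)
      · left
        have h2 : (2 * (n : ℤ)) ∣ (r - (n : ℤ) - e) := by
          have heq : r - (n : ℤ) - e = (((j : ℤ) * k + (n : ℤ)) - r) * (-1)
              - (e - (j : ℤ) * k) := by ring
          rw [heq]
          exact dvd_sub (hdvd.mul_right _) h
        have := dvd_small_eq_zero h2 (by linarith) (by linarith)
        linarith
      · right
        have h2 : (2 * (n : ℤ)) ∣ (r - (n : ℤ) + e) := by
          have heq : r - (n : ℤ) + e = (((j : ℤ) * k + (n : ℤ)) - r) * (-1)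
              - (-e - (j : ℤ) * k) := by ring
          rw [heq]
          exact dvd_sub (hdvd.mul_right _) h
        have := dvd_small_eq_zero h2 (by linarith) (by linarith)
        linarith
  -- value of phi at n
  have phin : phi n j (n : ℤ) = 0 ∨ phi n j (n : ℤ) = (n : ℤ) := by
    rcases Nat.even_or_odd j with ⟨t, ht⟩ | ⟨t, ht⟩
    · left
      have htZ : (j : ℤ) = 2 * (t : ℤ) := by exact_mod_cast (by omega : j = 2 * t)
      have heq : (j : ℤ) * (n : ℤ) + (n : ℤ) = (n : ℤ) + 2 * (n : ℤ) * (t : ℤ) := by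
        rw [htZ]; ring
      rw [phi, heq, Int.add_mul_emod_self_left, Int.emod_eq_of_lt (by linarith) (by linarith)]
      simp
    · right
      have htZ : (j : ℤ) = 2 * (t : ℤ) + 1 := by exact_mod_cast (by omega : j = 2 * t + 1)
      have heq : (j : ℤ) * (n : ℤ) + (n : ℤ) = 0 + 2 * (n : ℤ) * ((t : ℤ) + 1) := by
        rw [htZ]; ring
      rw [phi, heq, Int.add_mul_emod_self_left, Int.zero_emod]
      rw [abs_of_nonpos (by linarith)]
      ring
  -- main counting result
  have main : ∀ m : ℕ, 1 ≤ m → m ≤ Q - 1 →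
      ((Finset.Icc (1 : ℤ) ((n : ℤ) - 1)).filter
        (fun k => phi n j k = (d : ℤ) * (m : ℤ))).card = d := by
    intro m hm1 hm2
    have hmZ1 : (1 : ℤ) ≤ (m : ℤ) := by exact_mod_cast hm1
    have hmZ2 : (m : ℤ) ≤ (Q : ℤ) - 1 := by
      have : m + 1 ≤ Q := by omega
      have := (by exact_mod_cast this : (m : ℤ) + 1 ≤ (Q : ℤ))
      linarith
    have he0 : (0 : ℤ) < (d : ℤ) * (m : ℤ) := by positivity
    have he1 : (d : ℤ) * (m : ℤ) < (n : ℤ) := by nlinarith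
    set a := u * (m : ℤ) with ha
    have hP : ∀ k : ℤ, (phi n j k = (d : ℤ) * (m : ℤ))
        ↔ (k ≡ a [ZMOD 2 * (Q : ℤ)] ∨ k ≡ -a [ZMOD 2 * (Q : ℤ)]) := by
      intro k
      rw [phi_iff ((d : ℤ) * (m : ℤ)) he0.le he1 k, key (m : ℤ) k]
      have h1 : -((d : ℤ) * (m : ℤ)) = (d : ℤ) * (-(m : ℤ)) := by ring
      rw [h1, key (-(m : ℤ)) k]
      have h2 : u * (-(m : ℤ)) = -a := by rw [ha]; ring
      rw [h2]
    -- the two residue classes are distinct mod 2Q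
    have hdistinct : ¬ ((2 * (Q : ℤ)) ∣ (-a - a)) := by
      intro ⟨t, ht⟩
      have hq1 : (Q : ℤ) ∣ u * (m : ℤ) := ⟨-t, by rw [ha] at ht; linarith⟩
      have hq2 : (Q : ℤ) ∣ (m : ℤ) := hcuQ.symm.dvd_of_dvd_mul_left hq1
      have := Int.le_of_dvd (by linarith) hq2
      linarith
    -- 2Q does not divide a
    have hand : ¬ ((2 * (Q : ℤ)) ∣ a) := by
      intro h
      have h2 : (2 * (Q : ℤ)) ∣ (m : ℤ) := hcu.symm.dvd_of_dvd_mul_left (ha ▸ h)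
      have := Int.le_of_dvd (by linarith) h2
      linarith
    -- count on big interval
    have hbig : ((Finset.Ico (1 - (n : ℤ)) ((n : ℤ) + 1)).filter
        (fun k => k ≡ a [ZMOD 2 * (Q : ℤ)] ∨ k ≡ -a [ZMOD 2 * (Q : ℤ)])).card = 2 * d := by
      rw [Finset.filter_or]
      have hdisj : Disjoint
          ((Finset.Ico (1 - (n : ℤ)) ((n : ℤ) + 1)).filter (fun k => k ≡ a [ZMOD 2 * (Q : ℤ)]))
          ((Finset.Ico (1 - (n : ℤ)) ((n : ℤ) + 1)).filter (fun k => k ≡ -a [ZMOD 2 * (Q : ℤ)])) := by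
        rw [Finset.disjoint_left]
        intro k hk1 hk2
        rw [Finset.mem_filter] at hk1 hk2
        have h1 := hk1.2
        have h2 := hk2.2
        rw [Int.modEq_iff_dvd] at h1 h2
        exact hdistinct (by have := dvd_sub h2 h1; simpa using this)
      rw [Finset.card_union_of_disjoint hdisj]
      have hend : (n : ℤ) + 1 = (1 - (n : ℤ)) + (d : ℕ) * (2 * (Q : ℤ)) := by
        push_cast
        linarith
      rw [hend, count_class _ _ hMpos d a, count_class _ _ hMpos d (-a)]
      ring
    -- split the big interval
    have hsplit : (Finset.Ico (1 - (n : ℤ)) ((n : ℤ) + 1))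
        = (Finset.Icc (1 - (n : ℤ)) (-1) ∪ Finset.Icc (1 : ℤ) ((n : ℤ) - 1))
          ∪ {(0 : ℤ), (n : ℤ)} := by
      ext x
      simp only [Finset.mem_Ico, Finset.mem_union, Finset.mem_Icc, Finset.mem_insert,
        Finset.mem_singleton]
      omega
    rw [hsplit, Finset.filter_union] at hbig
    have hd12 : Disjoint (Finset.Icc (1 - (n : ℤ)) (-1)) (Finset.Icc (1 : ℤ) ((n : ℤ) - 1)) := by
      rw [Finset.disjoint_left]
      intro x hx1 hx2
      rw [Finset.mem_Icc] at hx1 hx2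
      omega
    have hd3 : Disjoint
        (Finset.Icc (1 - (n : ℤ)) (-1) ∪ Finset.Icc (1 : ℤ) ((n : ℤ) - 1))
        ({(0 : ℤ), (n : ℤ)} : Finset ℤ) := by
      rw [Finset.disjoint_left]
      intro x hx1 hx2
      simp only [Finset.mem_union, Finset.mem_Icc] at hx1
      simp only [Finset.mem_insert, Finset.mem_singleton] at hx2
      omega
    have hdis3 : Disjoint
        ((Finset.Icc (1 - (n : ℤ)) (-1) ∪ Finset.Icc (1 : ℤ) ((n : ℤ) - 1)).filter
          (fun k => k ≡ a [ZMOD 2 * (Q : ℤ)] ∨ k ≡ -a [ZMOD 2 * (Q : ℤ)]))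
        (({(0 : ℤ), (n : ℤ)} : Finset ℤ).filter
          (fun k => k ≡ a [ZMOD 2 * (Q : ℤ)] ∨ k ≡ -a [ZMOD 2 * (Q : ℤ)])) :=
      Finset.disjoint_filter_filter hd3
    have hdis12 : Disjoint
        ((Finset.Icc (1 - (n : ℤ)) (-1)).filter
          (fun k => k ≡ a [ZMOD 2 * (Q : ℤ)] ∨ k ≡ -a [ZMOD 2 * (Q : ℤ)]))
        ((Finset.Icc (1 : ℤ) ((n : ℤ) - 1)).filter
          (fun k => k ≡ a [ZMOD 2 * (Q : ℤ)] ∨ k ≡ -a [ZMOD 2 * (Q : ℤ)])) :=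
      Finset.disjoint_filter_filter hd12
    rw [Finset.card_union_of_disjoint hdis3, Finset.filter_union,
      Finset.card_union_of_disjoint hdis12] at hbig
    -- filter on {0, n} is empty
    have hpair : (({(0 : ℤ), (n : ℤ)} : Finset ℤ).filter
        (fun k => k ≡ a [ZMOD 2 * (Q : ℤ)] ∨ k ≡ -a [ZMOD 2 * (Q : ℤ)])).card = 0 := by
      rw [Finset.card_eq_zero, Finset.filter_eq_empty_iff]
      intro x hx
      simp only [Finset.mem_insert, Finset.mem_singleton] at hx
      rcases hx with rfl | rfl
      · rintro (h | h) <;> rw [Int.modEq_iff_dvd] at h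
        · exact hand (by simpa using h.neg_right)
        · exact hand (by simpa using h)
      · rw [← hP (n : ℤ)]
        intro h
        rcases phin with h0 | h0 <;> rw [h0] at h
        · linarith
        · linarith
    -- bijection k ↦ -k between negative and positive parts
    have hbij : ((Finset.Icc (1 - (n : ℤ)) (-1)).filter
          (fun k => k ≡ a [ZMOD 2 * (Q : ℤ)] ∨ k ≡ -a [ZMOD 2 * (Q : ℤ)])).card
        = ((Finset.Icc (1 : ℤ) ((n : ℤ) - 1)).filter
          (fun k => k ≡ a [ZMOD 2 * (Q : ℤ)] ∨ k ≡ -a [ZMOD 2 * (Q : ℤ)])).card := by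
      have hPneg : ∀ k : ℤ, (k ≡ a [ZMOD 2 * (Q : ℤ)] ∨ k ≡ -a [ZMOD 2 * (Q : ℤ)])
          → (-k ≡ a [ZMOD 2 * (Q : ℤ)] ∨ -k ≡ -a [ZMOD 2 * (Q : ℤ)]) := by
        intro k h
        rcases h with h | h
        · right
          rw [Int.modEq_iff_dvd] at h ⊢
          have heq : -a - -k = (a - k) * (-1) := by ring
          rw [heq]
          exact h.mul_right _
        · left
          rw [Int.modEq_iff_dvd] at h ⊢
          have heq : a - -k = (-a - k) * (-1) := by ring
          rw [heq]
          exact h.mul_right _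
      apply Finset.card_nbij' (fun k => -k) (fun k => -k)
      · intro x hx
        rw [Finset.mem_coe, Finset.mem_filter, Finset.mem_Icc] at hx ⊢
        exact ⟨by beta_reduce; omega, hPneg x hx.2⟩
      · intro x hx
        rw [Finset.mem_coe, Finset.mem_filter, Finset.mem_Icc] at hx ⊢
        exact ⟨by beta_reduce; omega, hPneg x hx.2⟩
      · intro x _; ring
      · intro x _; ring
    rw [Finset.filter_congr (fun x _ => hP x)]
    omega
  constructor
  · exact main
  · ext y
    simp only [Set.mem_diff, Set.mem_image, Set.mem_setOf_eq, Set.mem_insert_iff,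
      Set.mem_singleton_iff, not_or]
    constructor
    · rintro ⟨⟨k, hk, rfl⟩, hy0, hyn⟩
      -- d divides phi n j k and 0 ≤ phi ≤ n
      set r := ((j : ℤ) * k + (n : ℤ)) % (2 * (n : ℤ)) with hr
      have hr0 : 0 ≤ r := Int.emod_nonneg _ (by linarith)
      have hr1 : r < 2 * (n : ℤ) := Int.emod_lt_of_pos _ h2n
      have hdvdnZ : (d : ℤ) ∣ (n : ℤ) := ⟨(Q : ℤ), hQZ.symm⟩
      have hdvdjZ : (d : ℤ) ∣ (j : ℤ) := ⟨(J : ℤ), hJZ.symm⟩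
      have hdr : (d : ℤ) ∣ r := by
        rw [hr, Int.emod_def]
        exact dvd_sub (dvd_add (hdvdjZ.mul_right k) hdvdnZ)
          (((hdvdnZ.mul_left 2)).mul_right _)
      have hdphi : (d : ℤ) ∣ phi n j k := by
        rw [phi, ← hr]
        exact (dvd_abs _ _).mpr (dvd_sub hdr hdvdnZ)
      have hphi0 : 0 ≤ phi n j k := abs_nonneg _
      have hphin : phi n j k ≤ (n : ℤ) := by
        rw [phi, ← hr]
        rw [abs_le]
        constructor <;> linarith
      obtain ⟨s, hs⟩ := hdphi
      have hppos : 0 < phi n j k := lt_of_le_of_ne hphi0 (Ne.symm hy0)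
      have hds : 0 < (d : ℤ) * s := by rw [← hs]; exact hppos
      have hs1 : 1 ≤ s := by
        by_contra hcon
        push_neg at hcon
        have := mul_nonpos_of_nonneg_of_nonpos (by linarith : (0:ℤ) ≤ (d:ℤ)) (by linarith : s ≤ 0)
        linarith
      have hdsn : (d : ℤ) * s ≤ (n : ℤ) := by rw [← hs]; exact hphin
      have hdsn' : (d : ℤ) * s ≠ (n : ℤ) := by rw [← hs]; exact hyn
      have hlt : (d : ℤ) * s < (n : ℤ) := lt_of_le_of_ne hdsn hdsn'
      have hsQ : s ≤ (Q : ℤ) - 1 := by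
        rw [← hQZ] at hlt
        have := lt_of_mul_lt_mul_left hlt (by linarith : (0:ℤ) ≤ (d:ℤ))
        linarith
      refine ⟨s.toNat, by omega, ?_, ?_⟩
      · have : (s.toNat : ℤ) = s := Int.toNat_of_nonneg (by linarith)
        omega
      · rw [hs]
        congr 1
        exact (Int.toNat_of_nonneg (by linarith)).symm
    · rintro ⟨m, hm1, hm2, rfl⟩
      have hmZ1 : (1 : ℤ) ≤ (m : ℤ) := by exact_mod_cast hm1
      have hmZ2 : (m : ℤ) ≤ (Q : ℤ) - 1 := by
        have : m + 1 ≤ Q := by omega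
        have := (by exact_mod_cast this : (m : ℤ) + 1 ≤ (Q : ℤ))
        linarith
      have he0 : (0 : ℤ) < (d : ℤ) * (m : ℤ) := by positivity
      have he1 : (d : ℤ) * (m : ℤ) < (n : ℤ) := by nlinarith
      have hcard := main m hm1 hm2
      have hne : ((Finset.Icc (1 : ℤ) ((n : ℤ) - 1)).filter
          (fun k => phi n j k = (d : ℤ) * (m : ℤ))).Nonempty := by
        rw [← Finset.card_pos, hcard]; omega
      obtain ⟨k, hk⟩ := hne
      rw [Finset.mem_filter, Finset.mem_Icc] at hk
      exact ⟨⟨k, Set.mem_Icc.mpr hk.1, hk.2⟩, by linarith, by linarith⟩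
end

section
/- Let n, j ≥ 1 with gcd(j, 2n) = 2d and d < n, and define φ_j^(n)(k) = |D(jk, 2n)| with D(p, 2n) the representative of p mod 2n in [−n, n). Then for each m ∈ {1, …, (n−d)/(2d)}, the number of k ∈ {1, …, n−1} with φ_j^(n)(k) = 2dm equals 2d, and the image φ_j^(n)({1, …, n−1}) \ {0, n} equals {2dm : 1 ≤ m ≤ (n−d)/(2d)}. -/
lemma count_res (b d : ℕ) (hb : 0 < b) (v : ℤ) :
    ((Finset.Ico (0:ℤ) ((d:ℤ)*(b:ℤ))).filter (fun k => k ≡ v [ZMOD (b:ℤ)])).card = d := by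
  have hb' : (0:ℤ) < (b:ℤ) := by exact_mod_cast hb
  have h := Int.Ico_filter_modEq_card (0:ℤ) ((d:ℤ)*(b:ℤ)) hb' v
  push_cast at h
  have hbq : ((b:ℚ)) ≠ 0 := by exact_mod_cast hb.ne'
  have e1 : ((d:ℚ)*(b:ℚ) - (v:ℚ))/(b:ℚ) = (0 - (v:ℚ))/(b:ℚ) + (d:ℤ) := by
    field_simp; push_cast; ring
  rw [e1, Int.ceil_add_intCast] at h
  have : (((Finset.Ico (0:ℤ) ((d:ℤ)*(b:ℤ))).filter (fun k => k ≡ v [ZMOD (b:ℤ)])).card : ℤ) = d := by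
    rw [h]; simp
  exact_mod_cast this

lemma rep_eq_iff (n : ℕ) (hn : 0 < n) (x c : ℤ) (h1 : -(n:ℤ) ≤ c) (h2 : c < (n:ℤ)) :
    ((x + (n:ℤ)) % (2*(n:ℤ)) - (n:ℤ) = c) ↔ x ≡ c [ZMOD 2*(n:ℤ)] := by
  have hn' : (0:ℤ) < (n:ℤ) := by exact_mod_cast hn
  constructor
  · intro h
    have hme : (x + (n:ℤ)) % (2*(n:ℤ)) ≡ x + (n:ℤ) [ZMOD 2*(n:ℤ)] :=
      Int.emod_emod_of_dvd _ dvd_rfl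
    have h' : (x + (n:ℤ)) % (2*(n:ℤ)) = c + n := by linarith
    have h2' : x + (n:ℤ) ≡ c + (n:ℤ) [ZMOD 2*(n:ℤ)] := by rw [← h']; exact hme.symm
    have := h2'.sub_right (n:ℤ)
    simpa using this
  · intro h
    have h' : x + (n:ℤ) ≡ c + (n:ℤ) [ZMOD 2*(n:ℤ)] := h.add_right _
    have he : (x + (n:ℤ)) % (2*(n:ℤ)) = (c + (n:ℤ)) % (2*(n:ℤ)) := h'
    rw [he, Int.emod_eq_of_lt (by linarith) (by linarith)]
    ring


lemma mul_lt_helper (dz bz mz : ℤ) (hd : 0 < dz) (h : 2*mz < bz) : 2*dz*mz < dz*bz := by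
  nlinarith

theorem phi_image_and_card_even_case (n j d : ℕ) (hn : 1 ≤ n) (hj : 1 ≤ j)
    (hgcd : Nat.gcd j n = d) (hgcd2 : Nat.gcd j (2 * n) = 2 * d) (hdn : d < n) :
    (∀ m : ℕ, 1 ≤ m → m ≤ (n - d) / (2 * d) →
      ((Finset.Icc (1 : ℤ) ((n : ℤ) - 1)).filter
        (fun k => phi n j k = 2 * (d : ℤ) * (m : ℤ))).card = 2 * d) ∧
    (phi n j '' Set.Icc (1 : ℤ) ((n : ℤ) - 1)) \ {0, (n : ℤ)} =
      {y : ℤ | ∃ m : ℕ, 1 ≤ m ∧ m ≤ (n - d) / (2 * d) ∧ y = 2 * (d : ℤ) * (m : ℤ)} := by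
  obtain ⟨b, hb⟩ : d ∣ n := hgcd ▸ Nat.gcd_dvd_right j n
  obtain ⟨a, ha⟩ : 2*d ∣ j := hgcd2 ▸ Nat.gcd_dvd_left j (2*n)
  have hd : 0 < d := by
    rcases Nat.eq_zero_or_pos d with h | h
    · subst h; simp at hb; omega
    · exact h
  have hbpos : 0 < b := by
    rcases Nat.eq_zero_or_pos b with h | h
    · subst h; simp at hb; omega
    · exact h
  have hb1 : 1 < b := by nlinarith
  have h2n : 2*n = (2*d)*b := by rw [hb]; ring
  have haco : Nat.Coprime a b := by
    have h1 : (2*d) * Nat.gcd a b = (2*d) * 1 := by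
      rw [← Nat.gcd_mul_left, ← ha, ← h2n, hgcd2, Nat.mul_one]
    exact Nat.eq_of_mul_eq_mul_left (by omega) h1
  have hbodd : ¬ (2 ∣ b) := by
    intro h2b
    have h1 : d * Nat.gcd (2*a) b = d * 1 := by
      rw [← Nat.gcd_mul_left]
      have e1 : d * (2*a) = j := by rw [ha]; ring
      have e2 : d * b = n := hb.symm
      rw [e1, e2, hgcd, Nat.mul_one]
    have h2 : Nat.gcd (2*a) b = 1 := Nat.eq_of_mul_eq_mul_left hd h1
    have : 2 ∣ Nat.gcd (2*a) b := Nat.dvd_gcd ⟨a, rfl⟩ h2b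
    omega
  have hq : (n - d) / (2*d) = (b-1)/2 := by
    have hnd : n - d = d*(b-1) := by rw [hb, Nat.mul_sub, Nat.mul_one]
    rw [hnd]
    have : d*(b-1) / (2*d) = d*(b-1)/(d*2) := by ring_nf
    rw [this, Nat.mul_div_mul_left _ _ hd]
  have hm2 : ∀ m : ℕ, (m ≤ (n-d)/(2*d) ↔ 2*m < b) := by
    intro m
    rw [hq, Nat.le_div_iff_mul_le (by norm_num)]
    omega
  have hic : IsCoprime (a:ℤ) (b:ℤ) := Nat.isCoprime_iff_coprime.mpr haco
  obtain ⟨uu, v, huv⟩ := hic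
  have hu' : ((b:ℤ)) ∣ (a:ℤ)*uu - 1 := ⟨-v, by linarith⟩
  -- integer versions
  have hD : (0:ℤ) < (d:ℤ) := by exact_mod_cast hd
  have hB : (0:ℤ) < (b:ℤ) := by exact_mod_cast hbpos
  have hB1 : (1:ℤ) < (b:ℤ) := by exact_mod_cast hb1
  have hN : (n:ℤ) = (d:ℤ)*(b:ℤ) := by exact_mod_cast hb
  have hJ : (j:ℤ) = 2*(d:ℤ)*(a:ℤ) := by exact_mod_cast ha
  have h2N : 2*(n:ℤ) = (2*(d:ℤ))*(b:ℤ) := by rw [hN]; ring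
  have hnpos : 0 < n := hn
  have h2d0 : (2*(d:ℤ)) ≠ 0 := by positivity
  have hcancel : ∀ x y : ℤ,
      ((2*(d:ℤ))*x ≡ (2*(d:ℤ))*y [ZMOD 2*(n:ℤ)]) ↔ (x ≡ y [ZMOD (b:ℤ)]) := by
    intro x y
    rw [Int.modEq_iff_dvd, Int.modEq_iff_dvd, h2N]
    have e : (2*(d:ℤ))*y - (2*(d:ℤ))*x = (2*(d:ℤ))*(y-x) := by ring
    rw [e, mul_dvd_mul_iff_left h2d0]
  have hsolve : ∀ k c : ℤ, ((a:ℤ)*k ≡ c [ZMOD (b:ℤ)]) ↔ (k ≡ uu*c [ZMOD (b:ℤ)]) := by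
    intro k c
    obtain ⟨s, hs⟩ := hu'
    rw [Int.modEq_iff_dvd, Int.modEq_iff_dvd]
    constructor
    · rintro ⟨w, hw⟩
      exact ⟨uu*w + s*k, by linear_combination uu*hw + k*hs⟩
    · rintro ⟨w, hw⟩
      exact ⟨(a:ℤ)*w - s*c, by linear_combination (a:ℤ)*hw - c*hs⟩
  -- characterization of phi = 2dm
  have hphi_iff : ∀ (m : ℕ), 1 ≤ m → 2*m < b → ∀ k : ℤ,
      (phi n j k = 2*(d:ℤ)*(m:ℤ) ↔
        (k ≡ uu*(m:ℤ) [ZMOD (b:ℤ)] ∨ k ≡ uu*(-(m:ℤ)) [ZMOD (b:ℤ)])) := by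
    intro m hm1 hmb k
    have hmB : 2*(m:ℤ) < (b:ℤ) := by exact_mod_cast hmb
    have hm1' : (1:ℤ) ≤ (m:ℤ) := by exact_mod_cast hm1
    have hc0 : (0:ℤ) ≤ 2*(d:ℤ)*(m:ℤ) := by positivity
    have hcn : 2*(d:ℤ)*(m:ℤ) < (n:ℤ) := by rw [hN]; exact mul_lt_helper _ _ _ hD hmB
    rw [phi, abs_eq hc0,
      rep_eq_iff n hnpos _ _ (by linarith) hcn,
      rep_eq_iff n hnpos _ _ (by linarith) (by linarith)]
    have e1 : ((j:ℤ))*k ≡ 2*(d:ℤ)*(m:ℤ) [ZMOD 2*(n:ℤ)] ↔ k ≡ uu*(m:ℤ) [ZMOD (b:ℤ)] := by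
      have e : ((j:ℤ))*k = (2*(d:ℤ))*((a:ℤ)*k) := by rw [hJ]; ring
      have e' : 2*(d:ℤ)*(m:ℤ) = (2*(d:ℤ))*(m:ℤ) := by ring
      rw [e, e', hcancel, hsolve]
    have e2 : ((j:ℤ))*k ≡ -(2*(d:ℤ)*(m:ℤ)) [ZMOD 2*(n:ℤ)] ↔
        k ≡ uu*(-(m:ℤ)) [ZMOD (b:ℤ)] := by
      have e : ((j:ℤ))*k = (2*(d:ℤ))*((a:ℤ)*k) := by rw [hJ]; ring
      have e' : -(2*(d:ℤ)*(m:ℤ)) = (2*(d:ℤ))*(-(m:ℤ)) := by ring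
      rw [e, e', hcancel, hsolve]
    rw [e1, e2]
  -- b does not divide m for m in range
  have hbndvd : ∀ (m : ℕ), 1 ≤ m → 2*m < b → ¬ ((b:ℤ) ∣ (m:ℤ)) := by
    intro m hm1 hmb hdvd
    have : b ∣ m := by exact_mod_cast hdvd
    have := Nat.le_of_dvd (by omega) this
    omega
  -- the count
  have hcount : ∀ m : ℕ, 1 ≤ m → m ≤ (n - d) / (2 * d) →
      ((Finset.Icc (1 : ℤ) ((n : ℤ) - 1)).filter
        (fun k => phi n j k = 2 * (d : ℤ) * (m : ℤ))).card = 2 * d := by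
    intro m hm1 hmle
    have hmb : 2*m < b := (hm2 m).mp hmle
    have hiff := hphi_iff m hm1 hmb
    have hndvd := hbndvd m hm1 hmb
    -- 0 does not satisfy either congruence
    have h0not : ∀ s : ℤ, ((0:ℤ) ≡ uu*s [ZMOD (b:ℤ)]) → ((b:ℤ) ∣ s) := by
      intro s h0
      have := (hsolve 0 s).mpr h0
      rw [Int.modEq_iff_dvd] at this
      simpa using this
    have hset : ((Finset.Icc (1 : ℤ) ((n : ℤ) - 1)).filter
          (fun k => phi n j k = 2 * (d : ℤ) * (m : ℤ)))
        = (Finset.Ico (0:ℤ) ((d:ℤ)*(b:ℤ))).filter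
          (fun k => k ≡ uu*(m:ℤ) [ZMOD (b:ℤ)] ∨ k ≡ uu*(-(m:ℤ)) [ZMOD (b:ℤ)]) := by
      ext k
      simp only [Finset.mem_filter, Finset.mem_Icc, Finset.mem_Ico]
      constructor
      · rintro ⟨⟨hk1, hk2⟩, hphi⟩
        refine ⟨⟨by linarith, by rw [← hN]; linarith⟩, (hiff k).mp hphi⟩
      · rintro ⟨⟨hk1, hk2⟩, hcong⟩
        have hk0 : k ≠ 0 := by
          rintro rfl
          rcases hcong with h | h
          · exact hndvd (h0not _ h)
          · have := h0not _ h
            simp only [dvd_neg] at this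
            exact hndvd this
        refine ⟨⟨by omega, by rw [hN] at *; omega⟩, (hiff k).mpr hcong⟩
    rw [hset, Finset.filter_or]
    have hdisj : Disjoint
        ((Finset.Ico (0:ℤ) ((d:ℤ)*(b:ℤ))).filter (fun k => k ≡ uu*(m:ℤ) [ZMOD (b:ℤ)]))
        ((Finset.Ico (0:ℤ) ((d:ℤ)*(b:ℤ))).filter (fun k => k ≡ uu*(-(m:ℤ)) [ZMOD (b:ℤ)])) := by
      rw [Finset.disjoint_filter]
      intro x _ hP hQ
      -- x ≡ uu*m and x ≡ uu*(-m) : then a*x ≡ m and a*x ≡ -m so b ∣ 2m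
      have h1 : (a:ℤ)*x ≡ (m:ℤ) [ZMOD (b:ℤ)] := (hsolve x (m:ℤ)).mpr hP
      have h2 : (a:ℤ)*x ≡ -(m:ℤ) [ZMOD (b:ℤ)] := (hsolve x (-(m:ℤ))).mpr hQ
      have h3 : ((m:ℤ)) ≡ -(m:ℤ) [ZMOD (b:ℤ)] := h1.symm.trans h2
      rw [Int.modEq_iff_dvd] at h3
      have h4 : (b:ℤ) ∣ 2*(m:ℤ) := by
        have : -(m:ℤ) - (m:ℤ) = -(2*(m:ℤ)) := by ring
        rw [this, dvd_neg] at h3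
        exact h3
      have h5 : b ∣ 2*m := by exact_mod_cast h4
      have hcop2 : Nat.Coprime 2 b := (Nat.Prime.coprime_iff_not_dvd Nat.prime_two).mpr hbodd
      have h6 : b ∣ m := (Nat.Coprime.dvd_of_dvd_mul_left (hcop2.symm) h5)
      have := Nat.le_of_dvd (by omega) h6
      omega
    rw [Finset.card_union_of_disjoint hdisj, count_res b d hbpos, count_res b d hbpos]
    omega
  constructor
  · exact hcount
  · ext y
    simp only [Set.mem_diff, Set.mem_image, Set.mem_Icc, Set.mem_setOf_eq,
      Set.mem_insert_iff, Set.mem_singleton_iff]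
    constructor
    · rintro ⟨⟨k, ⟨hk1, hk2⟩, hky⟩, hy0n⟩
      push_neg at hy0n
      obtain ⟨hy0, hyn⟩ := hy0n
      set r := ((j:ℤ)*k + (n:ℤ)) % (2*(n:ℤ)) - (n:ℤ) with hr
      have hyr : y = |r| := by rw [← hky]; rfl
      have h2npos : (0:ℤ) < 2*(n:ℤ) := by positivity
      have hr_lb : -(n:ℤ) ≤ r := by
        have := Int.emod_nonneg ((j:ℤ)*k + (n:ℤ)) (by positivity : (2*(n:ℤ)) ≠ 0)
        simp only [hr]; linarith
      have hr_ub : r < (n:ℤ) := by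
        have := Int.emod_lt_of_pos ((j:ℤ)*k + (n:ℤ)) h2npos
        simp only [hr]; linarith
      have hdr : (2*(d:ℤ)) ∣ r := by
        have h1 : (2*(d:ℤ)) ∣ (j:ℤ)*k + (n:ℤ) - ((j:ℤ)*k + (n:ℤ)) % (2*(n:ℤ)) := by
          have h2 : 2*(n:ℤ) ∣ (j:ℤ)*k + (n:ℤ) - ((j:ℤ)*k + (n:ℤ)) % (2*(n:ℤ)) := 
            Int.dvd_self_sub_of_emod_eq rfl
          exact dvd_trans ⟨(b:ℤ), h2N⟩ h2
        have h3 : (2*(d:ℤ)) ∣ (j:ℤ)*k := ⟨(a:ℤ)*k, by rw [hJ]; ring⟩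
        have e : r = (j:ℤ)*k - ((j:ℤ)*k + (n:ℤ) - ((j:ℤ)*k + (n:ℤ)) % (2*(n:ℤ))) := by
          simp only [hr]; ring
        rw [e]
        exact dvd_sub h3 h1
      have hy0' : 0 < y := lt_of_le_of_ne (by rw [hyr]; exact abs_nonneg r) (Ne.symm hy0)
      have hyN : y ≤ (n:ℤ) := by rw [hyr]; exact abs_le.mpr ⟨hr_lb, le_of_lt hr_ub⟩
      have hyltN : y < (n:ℤ) := lt_of_le_of_ne hyN hyn
      have hdy : (2*(d:ℤ)) ∣ y := by rw [hyr]; exact (dvd_abs _ _).mpr hdr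
      obtain ⟨e, he⟩ := hdy
      have he1 : 1 ≤ e := by
        rcases le_or_gt 1 e with h | h
        · exact h
        · exfalso
          have he0 : e ≤ 0 := by omega
          have : 2*(d:ℤ)*e ≤ 0 := mul_nonpos_of_nonneg_of_nonpos (by positivity) he0
          rw [he] at hy0'
          linarith
      have he2 : 2*e < (b:ℤ) := by
        have h1 : 2*(d:ℤ)*e < (d:ℤ)*(b:ℤ) := by rw [← hN, ← he]; exact hyltN
        have h2 : (d:ℤ)*(2*e) < (d:ℤ)*(b:ℤ) := by linarith [h1]
        exact lt_of_mul_lt_mul_left h2 (le_of_lt hD)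
      refine ⟨e.toNat, by omega, ?_, ?_⟩
      · rw [hm2]
        omega
      · rw [he]
        have : ((e.toNat : ℤ)) = e := Int.toNat_of_nonneg (by omega)
        rw [this]
    · rintro ⟨m, hm1, hmle, rfl⟩
      have hpos : (0:ℤ) < 2*(d:ℤ)*(m:ℤ) := by
        have : (1:ℤ) ≤ (m:ℤ) := by exact_mod_cast hm1
        positivity
      have hmb : 2*m < b := (hm2 m).mp hmle
      have hcn : 2*(d:ℤ)*(m:ℤ) < (n:ℤ) := by
        have hmB : 2*(m:ℤ) < (b:ℤ) := by exact_mod_cast hmb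
        rw [hN]
        exact mul_lt_helper _ _ _ hD hmB
      have hnz : ((Finset.Icc (1 : ℤ) ((n : ℤ) - 1)).filter
          (fun k => phi n j k = 2 * (d : ℤ) * (m : ℤ))).Nonempty := by
        rw [← Finset.card_pos, hcount m hm1 hmle]
        omega
      obtain ⟨k, hk⟩ := hnz
      simp only [Finset.mem_filter, Finset.mem_Icc] at hk
      refine ⟨⟨k, ⟨hk.1.1, hk.1.2⟩, hk.2⟩, ?_⟩
      push_neg
      exact ⟨ne_of_gt hpos, ne_of_lt hcn⟩
end

section
/- Let n ≥ 1 and 1 ≤ j ≤ n with gcd(2j−1, n) = d. Then the modified entropy Ŝ_{n,j} := Σ_{i=1}^{n−1} cos²((2j−1)πi/(2n)) log(cos²((2j−1)πi/(2n))) equals 0 if j = (n+1)/2 (i.e. d = n), and otherwise equals d · Σ_{k=1}^{n/d − 1} cos²(πdk/(2n)) log(cos²(πdk/(2n))). -/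
open Real Finset

noncomputable def gfun (N x : ℝ) : ℝ :=
  Real.cos (π * x / (2 * N)) ^ 2 * Real.log (Real.cos (π * x / (2 * N)) ^ 2)

lemma cos_sq_add_int_mul_pi (x : ℝ) (k : ℤ) : Real.cos (x + k * π) ^ 2 = Real.cos x ^ 2 := by
  rw [Real.cos_sq, Real.cos_sq]
  congr 2
  rw [show 2 * (x + k * π) = 2 * x + k * (2 * π) by ring, Real.cos_add_int_mul_two_pi]

lemma gfun_period (N : ℝ) (hN : N ≠ 0) (x : ℝ) (k : ℤ) : gfun N (x + 2 * N * k) = gfun N x := by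
  unfold gfun
  have h : π * (x + 2 * N * k) / (2 * N) = π * x / (2 * N) + k * π := by
    field_simp
  rw [h, cos_sq_add_int_mul_pi]

lemma gfun_neg (N x : ℝ) : gfun N (-x) = gfun N x := by
  unfold gfun
  rw [show π * (-x) / (2 * N) = -(π * x / (2 * N)) by ring, Real.cos_neg]

lemma gfun_zero (N : ℝ) : gfun N 0 = 0 := by
  simp [gfun]

lemma half_sum (n a e t : ℕ) (hn : 1 ≤ n) (he : 1 ≤ e) (ht : a * e = n * t)
    (htodd : t % 2 = 1) :
    ∑ i ∈ range (2 * e), gfun n ((a : ℝ) * i) =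
      2 * ∑ i ∈ Finset.Icc 1 (e - 1), gfun n ((a : ℝ) * i) := by
  have hN : (n : ℝ) ≠ 0 := by positivity
  have hmid : gfun n ((a : ℝ) * e) = 0 := by
    obtain ⟨s, hs⟩ : ∃ s, t = 2 * s + 1 := ⟨t / 2, by omega⟩
    have hae : (a : ℝ) * e = (n : ℝ) * t := by exact_mod_cast congrArg (Nat.cast (R := ℝ)) ht
    unfold gfun
    have harg : π * ((a : ℝ) * e) / (2 * n) = π / 2 + (s : ℤ) * π := by
      rw [hae, hs]; push_cast; field_simp; ring
    rw [harg, cos_sq_add_int_mul_pi, Real.cos_pi_div_two]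
    norm_num
  have hsplit1 : range (2 * e) = insert 0 (Finset.Ioc 0 (2 * e - 1)) := by
    ext x; simp [Finset.mem_range, Finset.mem_Ioc]; omega
  have hsplit2 : Finset.Ioc 0 e = insert e (Finset.Ioc 0 (e - 1)) := by
    ext x; simp [Finset.mem_Ioc]; omega
  have hrefl : ∑ i ∈ Finset.Ioc e (2 * e - 1), gfun n ((a : ℝ) * i) =
      ∑ i ∈ Finset.Ioc 0 (e - 1), gfun n ((a : ℝ) * i) := by
    apply Finset.sum_nbij' (fun i => 2 * e - i) (fun i => 2 * e - i)
    · intro i hi; simp [Finset.mem_Ioc] at hi ⊢; omega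
    · intro i hi; simp [Finset.mem_Ioc] at hi ⊢; omega
    · intro i hi; simp [Finset.mem_Ioc] at hi; omega
    · intro i hi; simp [Finset.mem_Ioc] at hi; omega
    · intro i hi
      simp only [Finset.mem_Ioc] at hi
      have hc : ((2 * e - i : ℕ) : ℝ) = 2 * e - i := by
        have : i ≤ 2 * e := by omega
        push_cast [this]; ring
      rw [hc]
      have harg : (a : ℝ) * (2 * (e : ℝ) - i) = -((a : ℝ) * i) + 2 * (n : ℝ) * (t : ℤ) := by
        have : (a : ℝ) * e = (n : ℝ) * t := by exact_mod_cast congrArg (Nat.cast (R := ℝ)) ht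
        push_cast
        nlinarith [this]
      rw [harg, gfun_period n hN _ _, gfun_neg]
  rw [hsplit1, Finset.sum_insert (by simp), ← Finset.sum_Ioc_consecutive _ (Nat.zero_le e)
    (by omega : e ≤ 2 * e - 1), hsplit2, Finset.sum_insert (by simp), hmid, hrefl]
  have : Finset.Icc 1 (e - 1) = Finset.Ioc 0 (e - 1) := by
    ext x; simp [Finset.mem_Icc, Finset.mem_Ioc]; omega
  rw [this]
  simp [gfun_zero]
  ring

lemma sum_blocks (F : ℕ → ℝ) (M D : ℕ) (hF : ∀ q i, F (q * M + i) = F i) :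
    ∑ i ∈ range (D * M), F i = D * ∑ i ∈ range M, F i := by
  induction D with
  | zero => simp
  | succ D ih =>
    rw [Nat.succ_mul, Finset.sum_range_add, ih]
    have : ∀ i ∈ range M, F (D * M + i) = F i := fun i _ => hF D i
    rw [Finset.sum_congr rfl this]
    push_cast; ring

lemma key_lemma (n m d : ℕ) (hn : 1 ≤ n) (hm : m % 2 = 1) (hd : Nat.gcd m n = d) :
    ∑ i ∈ Finset.Icc 1 (n - 1), gfun n ((m : ℝ) * i) =
      (d : ℝ) * ∑ k ∈ Finset.Icc 1 (n / d - 1), gfun n ((d : ℝ) * k) := by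
  have hm1 : 1 ≤ m := by omega
  have hdpos : 1 ≤ d := by
    rw [← hd]; exact Nat.gcd_pos_of_pos_left _ (by omega)
  have hdn : d ∣ n := hd ▸ Nat.gcd_dvd_right m n
  have hdm : d ∣ m := hd ▸ Nat.gcd_dvd_left m n
  set e := n / d with he_def
  have hne : n = d * e := by rw [he_def, Nat.mul_div_cancel' hdn]
  have he1 : 1 ≤ e :=
    (Nat.one_le_div_iff (by omega)).2 (Nat.le_of_dvd (by omega) hdn)
  set m' := m / d with hm'_def
  have hmm' : m = d * m' := by rw [hm'_def, Nat.mul_div_cancel' hdm]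
  have hcop_e : Nat.Coprime m' e := by
    have := Nat.coprime_div_gcd_div_gcd (m := m) (n := n) (hd ▸ hdpos)
    rwa [hd] at this
  have hcop2 : Nat.Coprime m' 2 := by
    apply Nat.Coprime.coprime_dvd_left (Dvd.intro_left d hmm'.symm)
    exact Nat.coprime_two_right.mpr (Nat.odd_iff.mpr hm)
  have hcopM : Nat.Coprime m' (2 * e) := Nat.Coprime.mul_right hcop2 hcop_e
  set M := 2 * e with hM_def
  have hMpos : 0 < M := by omega
  have hN : (n : ℝ) ≠ 0 := by positivity
  -- pointwise rewrite
  have hpt : ∀ i : ℕ, gfun n ((m : ℝ) * i) = gfun n ((d : ℝ) * (((m' * i) % M : ℕ) : ℝ)) := by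
    intro i
    have hnat : m * i = 2 * n * (m' * i / M) + d * ((m' * i) % M) := by
      have h1 : m' * i = M * (m' * i / M) + (m' * i) % M := (Nat.div_add_mod _ _).symm
      calc m * i = d * (m' * i) := by rw [hmm']; ring
        _ = d * (M * (m' * i / M) + (m' * i) % M) := by rw [← h1]
        _ = 2 * n * (m' * i / M) + d * ((m' * i) % M) := by rw [hne, hM_def]; ring
    have hcast : (m : ℝ) * i = (d : ℝ) * (((m' * i) % M : ℕ) : ℝ) + 2 * (n : ℝ) * ((m' * i / M : ℕ) : ℤ) := by
      have hthis := congrArg (Nat.cast (R := ℝ)) hnat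
      push_cast at hthis
      rw [Int.cast_natCast]
      linarith
    rw [hcast, gfun_period n hN]
  -- Step A
  have hA : 2 * ∑ i ∈ Finset.Icc 1 (n - 1), gfun n ((m : ℝ) * i) =
      ∑ i ∈ range (2 * n), gfun n ((m : ℝ) * i) :=
    (half_sum n m n m hn hn (mul_comm m n) hm).symm
  -- Step B
  have hB : ∑ i ∈ range (2 * n), gfun n ((m : ℝ) * i) =
      (d : ℝ) * ∑ r ∈ range M, gfun n ((d : ℝ) * (((m' * r) % M : ℕ) : ℝ)) := by
    rw [Finset.sum_congr rfl (fun i _ => hpt i)]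
    have h2n : 2 * n = d * M := by rw [hne, hM_def]; ring
    rw [h2n]
    apply sum_blocks (fun i => gfun n ((d : ℝ) * (((m' * i) % M : ℕ) : ℝ)))
    intro q i
    show gfun _ _ = gfun _ _
    have hmod : m' * (q * M + i) % M = m' * i % M := by
      rw [show m' * (q * M + i) = m' * i + (m' * q) * M from by ring, Nat.add_mul_mod_self_right]
    rw [hmod]
  -- Step B3
  have hB3 : ∑ r ∈ range M, gfun n ((d : ℝ) * (((m' * r) % M : ℕ) : ℝ)) =
      ∑ r ∈ range M, gfun n ((d : ℝ) * r) := by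
    have hinj : ∀ x ∈ range M, ∀ y ∈ range M,
        (m' * x) % M = (m' * y) % M → x = y := by
      intro x hx y hy hxy
      simp [Finset.mem_range] at hx hy
      have h1 : m' * x ≡ m' * y [MOD M] := hxy
      have h2 : x ≡ y [MOD M] := Nat.ModEq.cancel_left_of_coprime hcopM.symm h1
      have h3 : x % M = y % M := h2
      rwa [Nat.mod_eq_of_lt hx, Nat.mod_eq_of_lt hy] at h3
    have himg : (range M).image (fun r => (m' * r) % M) = range M := by
      apply Finset.eq_of_subset_of_card_le
      · intro x hx
        simp only [Finset.mem_image, Finset.mem_range] at hx ⊢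
        obtain ⟨r, _, hr⟩ := hx
        rw [← hr]; exact Nat.mod_lt _ hMpos
      · rw [Finset.card_image_of_injOn (fun x hx y hy => hinj x hx y hy)]
    calc ∑ r ∈ range M, gfun n ((d : ℝ) * (((m' * r) % M : ℕ) : ℝ))
        = ∑ x ∈ (range M).image (fun r => (m' * r) % M), gfun n ((d : ℝ) * x) :=
          (Finset.sum_image (f := fun x : ℕ => gfun n ((d : ℝ) * (x : ℝ))) hinj).symm
      _ = ∑ r ∈ range M, gfun n ((d : ℝ) * r) := by rw [himg]
  -- Step C
  have hC : ∑ r ∈ range M, gfun n ((d : ℝ) * r) =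
      2 * ∑ k ∈ Finset.Icc 1 (e - 1), gfun n ((d : ℝ) * k) :=
    half_sum n d e 1 hn he1 (by omega) (by omega)
  have h2 : 2 * ∑ i ∈ Finset.Icc 1 (n - 1), gfun n ((m : ℝ) * i) =
      2 * ((d : ℝ) * ∑ k ∈ Finset.Icc 1 (e - 1), gfun n ((d : ℝ) * k)) := by
    rw [hA, hB, hB3, hC]; ring
  have he2 : n / d - 1 = e - 1 := rfl
  rw [he2]
  linarith

theorem modified_entropy_formula (n j d : ℕ) (hn : 1 ≤ n) (hj1 : 1 ≤ j) (hjn : j ≤ n)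
    (hd : Nat.gcd (2 * j - 1) n = d) :
    (2 * j = n + 1 →
      ∑ i ∈ Finset.Icc 1 (n - 1),
        (Real.cos ((2 * (j : ℝ) - 1) * π * i / (2 * n)))^2 *
          Real.log ((Real.cos ((2 * (j : ℝ) - 1) * π * i / (2 * n)))^2) = 0) ∧
    (2 * j ≠ n + 1 →
      ∑ i ∈ Finset.Icc 1 (n - 1),
        (Real.cos ((2 * (j : ℝ) - 1) * π * i / (2 * n)))^2 *
          Real.log ((Real.cos ((2 * (j : ℝ) - 1) * π * i / (2 * n)))^2) =
        (d : ℝ) * ∑ k ∈ Finset.Icc 1 (n / d - 1),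
          (Real.cos (π * d * k / (2 * n)))^2 *
            Real.log ((Real.cos (π * d * k / (2 * n)))^2)) := by
  set m := 2 * j - 1 with hm_def
  have hmcast : ((m : ℕ) : ℝ) = 2 * (j : ℝ) - 1 := by
    rw [hm_def]; push_cast [Nat.cast_sub (by omega : 1 ≤ 2 * j)]; ring
  have hmodd : m % 2 = 1 := by omega
  have hLHS : ∑ i ∈ Finset.Icc 1 (n - 1),
      (Real.cos ((2 * (j : ℝ) - 1) * π * i / (2 * n)))^2 *
        Real.log ((Real.cos ((2 * (j : ℝ) - 1) * π * i / (2 * n)))^2) =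
      ∑ i ∈ Finset.Icc 1 (n - 1), gfun n ((m : ℝ) * i) := by
    apply Finset.sum_congr rfl
    intro i _
    unfold gfun
    rw [hmcast]
    ring_nf
  have hkey := key_lemma n m d hn hmodd hd
  constructor
  · intro h
    have hmn : m = n := by omega
    have hdn : d = n := by rw [← hd, hmn, Nat.gcd_self]
    rw [hLHS, hkey, hdn]
    simp [Nat.div_self (by omega : 0 < n)]
  · intro _
    rw [hLHS, hkey]
    congr 1
    apply Finset.sum_congr rfl
    intro k _
    unfold gfun
    ring_nf
end
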